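/- Let $s \in \{1,\dots,n\}$ and let $h(p) = \frac{1 - \sum_{l=1}^n p^l}{1 - \sum_{l \ne s} p^l}$ on $\Delta_n$ (this is $p^0/(p^s+p^0)$). Then $\sum_{i,j=1}^n p^i(\delta^i_j - p^j)\, \partial_{p^i}\partial_{p^j} h(p) = 0$ on $\Delta_n$. -/

import Mathlib

open scoped BigOperators

noncomputable section

/-- The open standard orthogonal simplex in ℝⁿ. -/
def stdSimplexO (n : ℕ) : Set (Fin n → ℝ) :=
  {p | (∀ i, 0 < p i) ∧ ∑ i, p i < 1}

/-- The closed standard orthogonal simplex in ℝⁿ. -/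
def stdSimplexC (n : ℕ) : Set (Fin n → ℝ) :=
  {p | (∀ i, 0 ≤ p i) ∧ ∑ i, p i ≤ 1}

/-- First partial derivative in coordinate direction `i`. -/
def pd {n : ℕ} (u : (Fin n → ℝ) → ℝ) (i : Fin n) (p : Fin n → ℝ) : ℝ :=
  fderiv ℝ u p (Pi.single i 1)

/-- Second partial derivative `∂_j ∂_i`. -/
def pd2 {n : ℕ} (u : (Fin n → ℝ) → ℝ) (i j : Fin n) (p : Fin n → ℝ) : ℝ :=
  pd (pd u i) j p

/-- Kronecker delta. -/
def kdelta {n : ℕ} (i j : Fin n) : ℝ := if i = j then 1 else 0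

/-- Kolmogorov backward (Wright–Fisher) operator `L_n^*`. -/
def Lb {n : ℕ} (u : (Fin n → ℝ) → ℝ) (p : Fin n → ℝ) : ℝ :=
  (1/2) * ∑ i, ∑ j, p i * (kdelta i j - p j) * pd2 u i j p

/-- Kolmogorov forward (Wright–Fisher) operator `L_n`. -/
def Lf {n : ℕ} (u : (Fin n → ℝ) → ℝ) (p : Fin n → ℝ) : ℝ :=
  (1/2) * ∑ i, ∑ j, pd2 (fun q => q i * (kdelta i j - q j) * u q) i j p

variable {n : ℕ}

/- ## aux -/

def Lsum (n : ℕ) (t : Finset (Fin n)) : (Fin n → ℝ) →L[ℝ] ℝ :=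
  ∑ l ∈ t, ContinuousLinearMap.proj l

def NN (n : ℕ) : (Fin n → ℝ) → ℝ := fun q => 1 - ∑ l, q l
def DD (n : ℕ) (s : Fin n) : (Fin n → ℝ) → ℝ :=
  fun q => 1 - ∑ l ∈ Finset.univ.erase s, q l

lemma Lsum_apply (t : Finset (Fin n)) (j : Fin n) :
    Lsum n t (Pi.single j 1) = if j ∈ t then (1:ℝ) else 0 := by
  simp [Lsum, ContinuousLinearMap.sum_apply, Pi.single_apply, Finset.sum_ite_eq' t j]

lemma hasF_affine (t : Finset (Fin n)) (p : Fin n → ℝ) :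
    HasFDerivAt (fun q : Fin n → ℝ => 1 - ∑ l ∈ t, q l) (-(Lsum n t)) p := by
  have h1 : HasFDerivAt (fun q : Fin n → ℝ => ∑ l ∈ t, q l) (Lsum n t) p := by
    unfold Lsum
    exact HasFDerivAt.fun_sum (fun l _ =>
      (ContinuousLinearMap.proj (R := ℝ) (φ := fun _ : Fin n => ℝ) l).hasFDerivAt)
  exact h1.const_sub 1

lemma pd_G (s : Fin n) (m : ℕ) (a b : ℝ) (p : Fin n → ℝ)
    (hD : DD n s p ≠ 0) (j : Fin n) :
    pd (fun q => (a * NN n q + b * DD n s q) / (DD n s q) ^ (m+1)) j p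
      = (-(a + b * (1 - kdelta j s)) * DD n s p
          + ((m:ℝ)+1) * (1 - kdelta j s) * (a * NN n p + b * DD n s p)) /
        (DD n s p) ^ (m+2) := by
  have hA : HasFDerivAt (NN n) (-(Lsum n Finset.univ)) p := hasF_affine _ p
  have hB : HasFDerivAt (DD n s) (-(Lsum n (Finset.univ.erase s))) p := hasF_affine _ p
  have hnum : HasFDerivAt (fun q => a * NN n q + b * DD n s q)
      (a • (-(Lsum n Finset.univ)) + b • (-(Lsum n (Finset.univ.erase s)))) p :=
    (hA.const_mul a).add (hB.const_mul b)
  have hden : HasFDerivAt (fun q => (DD n s q) ^ (m+1))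
      ((((m:ℝ)+1) * (DD n s p) ^ m) • (-(Lsum n (Finset.univ.erase s)))) p := by
    have := (hasDerivAt_pow (m+1) (DD n s p)).comp_hasFDerivAt p hB
    simpa [Function.comp_def] using this
  have hinv : HasFDerivAt (fun q => ((DD n s q) ^ (m+1))⁻¹)
      ((-(((DD n s p) ^ (m+1)) ^ 2)⁻¹) • ((((m:ℝ)+1) * (DD n s p) ^ m) •
        (-(Lsum n (Finset.univ.erase s))))) p :=
    (hasDerivAt_inv (pow_ne_zero (m+1) hD)).comp_hasFDerivAt p hden
  have htot : HasFDerivAt (fun q => (a * NN n q + b * DD n s q) * ((DD n s q) ^ (m+1))⁻¹)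
      ((a * NN n p + b * DD n s p) • ((-(((DD n s p) ^ (m+1)) ^ 2)⁻¹) •
          ((((m:ℝ)+1) * (DD n s p) ^ m) • (-(Lsum n (Finset.univ.erase s)))))
        + ((DD n s p) ^ (m+1))⁻¹ •
          (a • (-(Lsum n Finset.univ)) + b • (-(Lsum n (Finset.univ.erase s))))) p :=
    hnum.mul hinv
  have hfun : (fun q => (a * NN n q + b * DD n s q) / (DD n s q) ^ (m+1))
      = (fun q => (a * NN n q + b * DD n s q) * ((DD n s q) ^ (m+1))⁻¹) :=
    funext fun q => div_eq_mul_inv _ _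
  rw [pd, hfun, htot.fderiv]
  have hj1 : Lsum n Finset.univ (Pi.single j 1) = 1 := by simp [Lsum_apply]
  have hj2 : Lsum n (Finset.univ.erase s) (Pi.single j 1) = 1 - kdelta j s := by
    rw [Lsum_apply]
    by_cases h : j = s <;> simp [kdelta, h, Finset.mem_erase]
  simp only [ContinuousLinearMap.add_apply, ContinuousLinearMap.smul_apply,
    ContinuousLinearMap.neg_apply, hj1, hj2, smul_eq_mul]
  field_simp
  ring

lemma pd2_h (s : Fin n) (p : Fin n → ℝ) (hD : DD n s p ≠ 0) (i j : Fin n) :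
    pd2 (fun q => (1 - ∑ l, q l) / (1 - ∑ l ∈ Finset.univ.erase s, q l)) i j p
    = (-(DD n s p) * ((1 - kdelta i s) + (1 - kdelta j s))
       + 2 * NN n p * (1 - kdelta i s) * (1 - kdelta j s)) / (DD n s p) ^ 3 := by
  have hfun : (fun q : Fin n → ℝ => (1 - ∑ l, q l) / (1 - ∑ l ∈ Finset.univ.erase s, q l))
      = (fun q => ((1:ℝ) * NN n q + 0 * DD n s q) / (DD n s q) ^ (0+1)) := by
    funext q; simp [NN, DD]
  have hcont : Continuous (DD n s) := by
    unfold DD; fun_prop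
  have hU : IsOpen {q : Fin n → ℝ | DD n s q ≠ 0} :=
    isOpen_ne.preimage hcont
  have hev : pd (fun q : Fin n → ℝ =>
        (1 - ∑ l, q l) / (1 - ∑ l ∈ Finset.univ.erase s, q l)) i
      =ᶠ[nhds p] (fun q => ((1 - kdelta i s) * NN n q + (-1) * DD n s q) / (DD n s q) ^ (1+1)) := by
    filter_upwards [hU.mem_nhds hD] with q hq
    rw [hfun, pd_G s 0 1 0 q hq i]
    rw [div_eq_div_iff (pow_ne_zero _ hq) (pow_ne_zero _ hq)]
    ring
  have h2 : pd2 (fun q : Fin n → ℝ =>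
        (1 - ∑ l, q l) / (1 - ∑ l ∈ Finset.univ.erase s, q l)) i j p
      = pd (fun q => ((1 - kdelta i s) * NN n q + (-1) * DD n s q) / (DD n s q) ^ (1+1)) j p := by
    rw [pd2, pd, pd, hev.fderiv_eq]
  rw [h2, pd_G s 1 (1 - kdelta i s) (-1) p hD j]
  rw [div_eq_div_iff (pow_ne_zero _ hD) (pow_ne_zero _ hD)]
  ring

lemma algebra_sum (p : Fin n → ℝ) (s : Fin n) (D Nv : ℝ)
    (hDval : D = 1 - ((∑ l, p l) - p s)) (hNval : Nv = 1 - ∑ l, p l) :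
    ∑ i, ∑ j, p i * (kdelta i j - p j) *
      (-(D) * ((1 - kdelta i s) + (1 - kdelta j s))
        + 2 * Nv * (1 - kdelta i s) * (1 - kdelta j s)) = 0 := by
  set P := ∑ l, p l with hP
  have hQdef : ∑ i, p i * (1 - kdelta i s) = P - p s := by
    have e : ∀ i : Fin n, p i * (1 - kdelta i s) = p i - (if i = s then p i else 0) := by
      intro i; by_cases h : i = s <;> simp [kdelta, h]
    rw [Finset.sum_congr rfl (fun i _ => e i), Finset.sum_sub_distrib]
    simp [Finset.sum_ite_eq' Finset.univ s p, hP]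
  have hsum_delta : ∀ (i : Fin n) (f : Fin n → ℝ), (∑ j, kdelta i j * f j) = f i := by
    intro i f
    simp [kdelta, ite_mul, Finset.sum_ite_eq Finset.univ i f]
  have hT2 : ∀ i : Fin n, (∑ j, p j *
      (-(D) * ((1 - kdelta i s) + (1 - kdelta j s))
        + 2 * Nv * (1 - kdelta i s) * (1 - kdelta j s)))
      = (-(D) * (1 - kdelta i s)) * P + (-(D)) * (P - p s)
        + (2 * Nv * (1 - kdelta i s)) * (P - p s) := by
    intro i
    have e : ∀ j : Fin n, p j *
        (-(D) * ((1 - kdelta i s) + (1 - kdelta j s))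
          + 2 * Nv * (1 - kdelta i s) * (1 - kdelta j s))
        = (-(D) * (1 - kdelta i s)) * p j + (-(D)) * (p j * (1 - kdelta j s))
          + (2 * Nv * (1 - kdelta i s)) * (p j * (1 - kdelta j s)) := by
      intro j; ring
    rw [Finset.sum_congr rfl (fun j _ => e j)]
    rw [Finset.sum_add_distrib, Finset.sum_add_distrib,
      ← Finset.mul_sum, ← Finset.mul_sum, ← Finset.mul_sum, hQdef, hP]
  have hinner : ∀ i : Fin n, (∑ j, p i * (kdelta i j - p j) *
      (-(D) * ((1 - kdelta i s) + (1 - kdelta j s))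
        + 2 * Nv * (1 - kdelta i s) * (1 - kdelta j s)))
      = (-2*D + 2*Nv) * (p i * (1 - kdelta i s))
        + (D * P - 2 * Nv * (P - p s)) * (p i * (1 - kdelta i s))
        + (D * (P - p s)) * p i := by
    intro i
    have e1 : ∀ j : Fin n, p i * (kdelta i j - p j) *
        (-(D) * ((1 - kdelta i s) + (1 - kdelta j s))
          + 2 * Nv * (1 - kdelta i s) * (1 - kdelta j s))
        = kdelta i j * (p i *
            (-(D) * ((1 - kdelta i s) + (1 - kdelta j s))
              + 2 * Nv * (1 - kdelta i s) * (1 - kdelta j s)))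
          - p i * (p j *
            (-(D) * ((1 - kdelta i s) + (1 - kdelta j s))
              + 2 * Nv * (1 - kdelta i s) * (1 - kdelta j s))) := by
      intro j; ring
    rw [Finset.sum_congr rfl (fun j _ => e1 j), Finset.sum_sub_distrib,
      hsum_delta i, ← Finset.mul_sum, hT2 i]
    have hsq : (1 - kdelta i s) * (1 - kdelta i s) = (1 - kdelta i s) := by
      by_cases h : i = s <;> simp [kdelta, h]
    linear_combination (2 * Nv * p i) * hsq
  rw [Finset.sum_congr rfl (fun i _ => hinner i)]
  rw [Finset.sum_add_distrib, Finset.sum_add_distrib,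
    ← Finset.mul_sum, ← Finset.mul_sum, ← Finset.mul_sum, hQdef, hP]
  rw [hDval, hNval, hP]
  ring

theorem stmt4 (n : ℕ) (s : Fin n) :
    ∀ p ∈ stdSimplexO n,
      ∑ i, ∑ j, p i * (kdelta i j - p j) *
        pd2 (fun q => (1 - ∑ l, q l) / (1 - ∑ l ∈ Finset.univ.erase s, q l)) i j p = 0 := by
  intro p hp
  obtain ⟨hpos, hsum⟩ := hp
  have hserase : ∑ l ∈ Finset.univ.erase s, p l = (∑ l, p l) - p s :=
    Finset.sum_erase_eq_sub (Finset.mem_univ s)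
  have hD : DD n s p ≠ 0 := by
    have h1 := hpos s
    unfold DD
    rw [hserase]
    intro h
    nlinarith
  have hrw : ∀ i j : Fin n, p i * (kdelta i j - p j) *
      pd2 (fun q => (1 - ∑ l, q l) / (1 - ∑ l ∈ Finset.univ.erase s, q l)) i j p
      = (p i * (kdelta i j - p j) *
          (-(DD n s p) * ((1 - kdelta i s) + (1 - kdelta j s))
            + 2 * NN n p * (1 - kdelta i s) * (1 - kdelta j s))) / (DD n s p) ^ 3 := by
    intro i j
    rw [pd2_h s p hD i j, mul_div_assoc]
  calc ∑ i, ∑ j, p i * (kdelta i j - p j) *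
        pd2 (fun q => (1 - ∑ l, q l) / (1 - ∑ l ∈ Finset.univ.erase s, q l)) i j p
      = (∑ i, ∑ j, p i * (kdelta i j - p j) *
          (-(DD n s p) * ((1 - kdelta i s) + (1 - kdelta j s))
            + 2 * NN n p * (1 - kdelta i s) * (1 - kdelta j s))) / (DD n s p) ^ 3 := by
        rw [Finset.sum_div]
        refine Finset.sum_congr rfl fun i _ => ?_
        rw [Finset.sum_div]
        exact Finset.sum_congr rfl fun j _ => hrw i j
    _ = 0 := by
        rw [algebra_sum p s (DD n s p) (NN n p) (by unfold DD; rw [hserase]) rfl]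
        simp
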